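/- Assume conditions (A1)–(A4). If p_n^2/n = o(1), then for every Δ > 0, sup over β with ||β − β_{n0}|| ≤ Δ√(p_n/n) and over unit vectors b ∈ R^{p_n} of |b^T [D_n(β) − D̄_n(β)] b| is O_p(√(n p_n)). -/

import Mathlib

open MeasureTheory ProbabilityTheory Filter Matrix
open scoped BigOperators ENNReal NNReal Topology

noncomputable section

namespace GEE

/-- Euclidean norm of a vector in `Fin k → ℝ`. -/
def vnorm {k : ℕ} (v : Fin k → ℝ) : ℝ := Real.sqrt (∑ i, v i ^ 2)

/-- Frobenius norm of a real matrix. -/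
def fnorm {a b : ℕ} (M : Matrix (Fin a) (Fin b) ℝ) : ℝ :=
  Real.sqrt (∑ i, ∑ j, M i j ^ 2)

/-- The logistic (inverse logit) function. -/
def logistic (t : ℝ) : ℝ := Real.exp t / (1 + Real.exp t)

/-- `Z_n = O_p(a_n)` : boundedness in probability of `Z_n / a_n`. -/
def IsBigOP {Ω : ℕ → Type} [∀ n, MeasurableSpace (Ω n)]
    (P : ∀ n, Measure (Ω n)) (Z : ∀ n, Ω n → ℝ) (a : ℕ → ℝ) : Prop :=
  ∀ ε : ℝ, 0 < ε → ∃ C : ℝ, 0 < C ∧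
    ∀ᶠ n in atTop, P n {ω | C * a n < |Z n ω|} ≤ ENNReal.ofReal ε

/-- `Z_n = o_p(a_n)` : `Z_n / a_n` converges to `0` in probability. -/
def IsLittleOP {Ω : ℕ → Type} [∀ n, MeasurableSpace (Ω n)]
    (P : ∀ n, Measure (Ω n)) (Z : ∀ n, Ω n → ℝ) (a : ℕ → ℝ) : Prop :=
  ∀ ε : ℝ, 0 < ε →
    Tendsto (fun n => P n {ω | ε * a n < |Z n ω|}) atTop (𝓝 0)

/-- Convergence in distribution to the standard normal law, stated via CDFs. -/
def TendstoStdNormal {Ω : ℕ → Type} [∀ n, MeasurableSpace (Ω n)]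
    (P : ∀ n, Measure (Ω n)) (Z : ∀ n, Ω n → ℝ) : Prop :=
  ∀ t : ℝ, Tendsto (fun n => (P n {ω | Z n ω ≤ t}).toReal) atTop
    (𝓝 ((gaussianReal 0 1 (Set.Iic t)).toReal))

/-- Convergence in distribution to the `l`-dimensional standard normal law `N_l(0, I_l)`. -/
def TendstoStdNormalVec {Ω : ℕ → Type} [∀ n, MeasurableSpace (Ω n)] (l : ℕ)
    (P : ∀ n, Measure (Ω n)) (Z : ∀ n, Ω n → Fin l → ℝ) : Prop :=
  ∀ t : Fin l → ℝ, Tendsto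
    (fun n => (P n {ω | ∀ j, Z n ω j ≤ t j}).toReal) atTop
    (𝓝 (((Measure.pi fun _ : Fin l => gaussianReal 0 1) {x | ∀ j, x j ≤ t j}).toReal))

/-- The chi-squared distribution with `l` degrees of freedom, realized as the law of the
sum of squares of `l` i.i.d. standard normals. -/
def chiSq (l : ℕ) : Measure ℝ :=
  Measure.map (fun x : Fin l → ℝ => ∑ j, x j ^ 2)
    (Measure.pi fun _ : Fin l => gaussianReal 0 1)

/-- Convergence in distribution to the chi-squared law with `l` degrees of freedom. -/
def TendstoChiSq {Ω : ℕ → Type} [∀ n, MeasurableSpace (Ω n)] (l : ℕ)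
    (P : ∀ n, Measure (Ω n)) (Z : ∀ n, Ω n → ℝ) : Prop :=
  ∀ t : ℝ, Tendsto (fun n => (P n {ω | Z n ω ≤ t}).toReal) atTop
    (𝓝 ((chiSq l (Set.Iic t)).toReal))

/-- Marginal mean vector `π_i(β)` of cluster `i` under the marginal logistic model. -/
def piv {a b : ℕ} (Xi : Matrix (Fin a) (Fin b) ℝ) (β : Fin b → ℝ) : Fin a → ℝ :=
  fun j => logistic (Xi.mulVec β j)

/-- The diagonal matrix `A_i(β)^{1/2}`. -/
def Ahalf {a b : ℕ} (Xi : Matrix (Fin a) (Fin b) ℝ) (β : Fin b → ℝ) :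
    Matrix (Fin a) (Fin a) ℝ :=
  Matrix.diagonal fun j => Real.sqrt (piv Xi β j * (1 - piv Xi β j))

/-- The diagonal matrix `A_i(β)^{-1/2}`. -/
def Ainvhalf {a b : ℕ} (Xi : Matrix (Fin a) (Fin b) ℝ) (β : Fin b → ℝ) :
    Matrix (Fin a) (Fin a) ℝ :=
  Matrix.diagonal fun j => (Real.sqrt (piv Xi β j * (1 - piv Xi β j)))⁻¹

/-- Standardized residual `ε_i(β) = A_i(β)^{-1/2} (Y_i - π_i(β))`. -/
def eps {a b : ℕ} (Xi : Matrix (Fin a) (Fin b) ℝ) (β : Fin b → ℝ) (Yi : Fin a → ℝ) :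
    Fin a → ℝ :=
  (Ainvhalf Xi β).mulVec (Yi - piv Xi β)

/-- Single-cluster contribution `X_iᵀ A_i^{1/2}(β) W A_i^{-1/2}(β) (Y_i - π_i(β))` to a GEE
estimating function with working inverse-correlation matrix `W`. -/
def Scluster {a b : ℕ} (Xi : Matrix (Fin a) (Fin b) ℝ) (W : Matrix (Fin a) (Fin a) ℝ)
    (β : Fin b → ℝ) (Yi : Fin a → ℝ) : Fin b → ℝ :=
  (Xiᵀ * Ahalf Xi β * W * Ainvhalf Xi β).mulVec (Yi - piv Xi β)

/-- Single-cluster contribution `X_iᵀ A_i^{1/2}(β) W A_i^{1/2}(β) X_i` to `H̄_n(β)`. -/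
def Hcluster {a b : ℕ} (Xi : Matrix (Fin a) (Fin b) ℝ) (W : Matrix (Fin a) (Fin a) ℝ)
    (β : Fin b → ℝ) : Matrix (Fin b) (Fin b) ℝ :=
  Xiᵀ * Ahalf Xi β * W * Ahalf Xi β * Xi

/-- Single-cluster contribution `X_iᵀ A_i^{1/2}(β) W R W A_i^{1/2}(β) X_i` to `M̄_n(β)`. -/
def Mcluster {a b : ℕ} (Xi : Matrix (Fin a) (Fin b) ℝ) (W R : Matrix (Fin a) (Fin a) ℝ)
    (β : Fin b → ℝ) : Matrix (Fin b) (Fin b) ℝ :=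
  Xiᵀ * Ahalf Xi β * W * R * W * Ahalf Xi β * Xi

/-- Single-cluster contribution `X_iᵀ A_i^{1/2}(β) W ε_i(β) ε_i(β)ᵀ W A_i^{1/2}(β) X_i` to the
middle of the sandwich estimator. -/
def Mhatcluster {a b : ℕ} (Xi : Matrix (Fin a) (Fin b) ℝ) (W : Matrix (Fin a) (Fin a) ℝ)
    (β : Fin b → ℝ) (Yi : Fin a → ℝ) : Matrix (Fin b) (Fin b) ℝ :=
  Xiᵀ * Ahalf Xi β * W * vecMulVec (eps Xi β Yi) (eps Xi β Yi) * W * Ahalf Xi β * Xi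

/-- The Jacobian matrix (`∂f/∂βᵀ`) of a map `f : (Fin b → ℝ) → (Fin b → ℝ)` at `β`. -/
def jacobian {b : ℕ} (f : (Fin b → ℝ) → (Fin b → ℝ)) (β : Fin b → ℝ) :
    Matrix (Fin b) (Fin b) ℝ :=
  Matrix.of fun k l => fderiv ℝ (fun x => f x k) β (Pi.single l 1)

/-- Smallest Rayleigh quotient value over unit vectors; equals `λ_min(M)` for symmetric `M`. -/
def lmin {b : ℕ} (M : Matrix (Fin b) (Fin b) ℝ) : ℝ :=
  sInf {r | ∃ v : Fin b → ℝ, vnorm v = 1 ∧ r = v ⬝ᵥ M.mulVec v}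

/-- Largest Rayleigh quotient value over unit vectors; equals `λ_max(M)` for symmetric `M`. -/
def lmax {b : ℕ} (M : Matrix (Fin b) (Fin b) ℝ) : ℝ :=
  sSup {r | ∃ v : Fin b → ℝ, vnorm v = 1 ∧ r = v ⬝ᵥ M.mulVec v}

/-! General GEE versions (arbitrary smooth marginal mean function `μ`). -/

/-- Marginal mean vector `μ_i(β)` in the general GEE model with mean function `mu`. -/
def gpiv {a b : ℕ} (mu : ℝ → ℝ) (Xi : Matrix (Fin a) (Fin b) ℝ) (β : Fin b → ℝ) :
    Fin a → ℝ :=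
  fun j => mu (Xi.mulVec β j)

/-- `A_i(β)^{1/2}` in the general GEE model: diagonal with entries `√(μ̇(X_ijᵀ β))`. -/
def gAhalf {a b : ℕ} (mu : ℝ → ℝ) (Xi : Matrix (Fin a) (Fin b) ℝ) (β : Fin b → ℝ) :
    Matrix (Fin a) (Fin a) ℝ :=
  Matrix.diagonal fun j => Real.sqrt (deriv mu (Xi.mulVec β j))

/-- `A_i(β)^{-1/2}` in the general GEE model. -/
def gAinvhalf {a b : ℕ} (mu : ℝ → ℝ) (Xi : Matrix (Fin a) (Fin b) ℝ) (β : Fin b → ℝ) :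
    Matrix (Fin a) (Fin a) ℝ :=
  Matrix.diagonal fun j => (Real.sqrt (deriv mu (Xi.mulVec β j)))⁻¹

/-- Standardized residual in the general GEE model. -/
def geps {a b : ℕ} (mu : ℝ → ℝ) (Xi : Matrix (Fin a) (Fin b) ℝ) (β : Fin b → ℝ)
    (Yi : Fin a → ℝ) : Fin a → ℝ :=
  (gAinvhalf mu Xi β).mulVec (Yi - gpiv mu Xi β)

/-- Single-cluster contribution to the general GEE estimating function. -/
def gScluster {a b : ℕ} (mu : ℝ → ℝ) (Xi : Matrix (Fin a) (Fin b) ℝ)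
    (W : Matrix (Fin a) (Fin a) ℝ) (β : Fin b → ℝ) (Yi : Fin a → ℝ) : Fin b → ℝ :=
  (Xiᵀ * gAhalf mu Xi β * W * gAinvhalf mu Xi β).mulVec (Yi - gpiv mu Xi β)

/-- Single-cluster contribution to `H̄_n(β)` in the general GEE model. -/
def gHcluster {a b : ℕ} (mu : ℝ → ℝ) (Xi : Matrix (Fin a) (Fin b) ℝ)
    (W : Matrix (Fin a) (Fin a) ℝ) (β : Fin b → ℝ) : Matrix (Fin b) (Fin b) ℝ :=
  Xiᵀ * gAhalf mu Xi β * W * gAhalf mu Xi β * Xi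

/-- Single-cluster contribution to `M̄_n(β)` in the general GEE model. -/
def gMcluster {a b : ℕ} (mu : ℝ → ℝ) (Xi : Matrix (Fin a) (Fin b) ℝ)
    (W R : Matrix (Fin a) (Fin a) ℝ) (β : Fin b → ℝ) : Matrix (Fin b) (Fin b) ℝ :=
  Xiᵀ * gAhalf mu Xi β * W * R * W * gAhalf mu Xi β * Xi

end GEE

open GEE

namespace GEEAux
open GEE

lemma one_add_exp_pos (s : ℝ) : (0:ℝ) < 1 + Real.exp s := by positivity

lemma logistic_pos (s : ℝ) : 0 < logistic s := by
  unfold logistic; positivity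

lemma logistic_lt_one (s : ℝ) : logistic s < 1 := by
  unfold logistic
  rw [div_lt_one (one_add_exp_pos s)]; linarith

lemma logistic_mono {a b : ℝ} (h : a ≤ b) : logistic a ≤ logistic b := by
  unfold logistic
  rw [div_le_div_iff₀ (one_add_exp_pos a) (one_add_exp_pos b)]
  have := Real.exp_le_exp.2 h
  nlinarith [Real.exp_pos a, Real.exp_pos b]

lemma one_sub_logistic (s : ℝ) : 1 - logistic s = 1 / (1 + Real.exp s) := by
  unfold logistic
  field_simp
  ring

lemma hasDerivAt_logistic (s : ℝ) :
    HasDerivAt logistic (logistic s * (1 - logistic s)) s := by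
  have hd : HasDerivAt (fun t => 1 + Real.exp t) (Real.exp s) s := by
    exact (Real.hasDerivAt_exp s).const_add 1
  have h := (Real.hasDerivAt_exp s).div hd (ne_of_gt (one_add_exp_pos s))
  refine h.congr_deriv ?_
  symm
  rw [one_sub_logistic]; unfold logistic
  field_simp; ring

/-- shift bound: `logistic (s-1) ≥ e⁻¹ logistic s` style bounds. -/
lemma logistic_shift_lower {s0 s : ℝ} (h : s0 - 1 ≤ s) :
    Real.exp (-1) * logistic s0 ≤ logistic s := by
  have h1 : Real.exp (-1) * logistic s0 ≤ logistic (s0 - 1) := by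
    unfold logistic
    rw [Real.exp_sub, Real.exp_neg]
    have e1 : (0:ℝ) < Real.exp 1 := Real.exp_pos 1
    have e0 : (0:ℝ) < Real.exp s0 := Real.exp_pos s0
    have he : (1:ℝ) ≤ Real.exp 1 := by nlinarith [Real.add_one_le_exp (1:ℝ)]
    have hx : Real.exp s0 / Real.exp 1 / (1 + Real.exp s0 / Real.exp 1)
        = Real.exp s0 / (Real.exp 1 + Real.exp s0) := by
      field_simp
    have hy : (Real.exp 1)⁻¹ * (Real.exp s0 / (1 + Real.exp s0))
        = Real.exp s0 / (Real.exp 1 * (1 + Real.exp s0)) := by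
      field_simp
    rw [hx, hy]
    apply div_le_div_of_nonneg_left e0.le (by positivity) (by nlinarith)
  exact h1.trans (logistic_mono h)

lemma one_sub_logistic_shift_lower {s0 s : ℝ} (h : s ≤ s0 + 1) :
    Real.exp (-1) * (1 - logistic s0) ≤ 1 - logistic s := by
  have mono : 1 - logistic (s0 + 1) ≤ 1 - logistic s := by
    have := logistic_mono h; linarith
  have h1 : Real.exp (-1) * (1 - logistic s0) ≤ 1 - logistic (s0 + 1) := by
    rw [one_sub_logistic, one_sub_logistic, Real.exp_add, Real.exp_neg]
    have e1 : (0:ℝ) < Real.exp 1 := Real.exp_pos 1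
    have e0 : (0:ℝ) < Real.exp s0 := Real.exp_pos s0
    have he : (1:ℝ) ≤ Real.exp 1 := by nlinarith [Real.add_one_le_exp (1:ℝ)]
    have hy : (Real.exp 1)⁻¹ * (1 / (1 + Real.exp s0))
        = 1 / (Real.exp 1 * (1 + Real.exp s0)) := by field_simp
    rw [hy]
    apply div_le_div_of_nonneg_left (by norm_num) (by positivity) (by nlinarith)
  linarith

/-- `A(s) = √(σ(s)(1-σ(s)))`. -/
def Af (s : ℝ) : ℝ := Real.sqrt (logistic s * (1 - logistic s))
def Af' (s : ℝ) : ℝ := Af s * (1 - 2 * logistic s) / 2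

lemma sig_mul_pos (s : ℝ) : 0 < logistic s * (1 - logistic s) :=
  mul_pos (logistic_pos s) (by linarith [logistic_lt_one s])

lemma Af_pos (s : ℝ) : 0 < Af s := Real.sqrt_pos.2 (sig_mul_pos s)

lemma Af_sq (s : ℝ) : (Af s)^2 = logistic s * (1 - logistic s) :=
  Real.sq_sqrt (sig_mul_pos s).le

lemma Af_le_half (s : ℝ) : Af s ≤ 1/2 := by
  have h : logistic s * (1 - logistic s) ≤ (1/2)^2 := by
    nlinarith [sq_nonneg (logistic s - 1/2)]
  calc Af s ≤ Real.sqrt ((1/2)^2) := Real.sqrt_le_sqrt h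
  _ = 1/2 := by rw [Real.sqrt_sq]; norm_num

lemma abs_Af'_le (s : ℝ) : |Af' s| ≤ 1/4 := by
  have h1 : |Af s| ≤ 1/2 := abs_le.2 ⟨by linarith [Af_pos s], Af_le_half s⟩
  have h2 : |1 - 2 * logistic s| ≤ 1 :=
    abs_le.2 ⟨by linarith [logistic_lt_one s], by linarith [logistic_pos s]⟩
  unfold Af'
  rw [abs_div, abs_mul]
  rw [abs_of_pos (by norm_num : (0:ℝ) < 2)]
  calc |Af s| * |1 - 2 * logistic s| / 2 ≤ (1/2) * 1 / 2 := by
        apply div_le_div_of_nonneg_right ?_ (by norm_num)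
        exact mul_le_mul h1 h2 (abs_nonneg _) (by norm_num)
  _ = 1/4 := by norm_num

lemma hasDerivAt_Af (s : ℝ) : HasDerivAt Af (Af' s) s := by
  have hg : HasDerivAt (fun t => logistic t * (1 - logistic t))
      ((logistic s * (1 - logistic s)) * (1 - logistic s)
        + logistic s * (-(logistic s * (1 - logistic s)))) s := by
    have h1 := hasDerivAt_logistic s
    have h2 : HasDerivAt (fun t => 1 - logistic t) (-(logistic s * (1 - logistic s))) s := by
      exact h1.const_sub 1
    exact h1.mul h2
  have h := hg.sqrt (ne_of_gt (sig_mul_pos s))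
  refine h.congr_deriv ?_
  symm
  unfold Af' Af
  have hA := Af_pos s
  unfold Af at hA
  have hsq : Real.sqrt (logistic s * (1 - logistic s)) ^ 2 = logistic s * (1 - logistic s) :=
    Real.sq_sqrt (sig_mul_pos s).le
  field_simp
  linear_combination (1 - 2 * logistic s) * hsq

/-- `h_y(s) = (y - σ(s)) / A(s)`. -/
def hf (y s : ℝ) : ℝ := (y - logistic s) / Af s
def hf' (y s : ℝ) : ℝ :=
  (-(logistic s * (1 - logistic s)) * Af s - (y - logistic s) * Af' s) / (Af s)^2

lemma hasDerivAt_hf (y s : ℝ) : HasDerivAt (hf y) (hf' y s) s := by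
  have h1 : HasDerivAt (fun t => y - logistic t) (-(logistic s * (1 - logistic s))) s := by
    exact (hasDerivAt_logistic s).const_sub y
  exact h1.div (hasDerivAt_Af s) (ne_of_gt (Af_pos s))

lemma abs_hf_le {y s c : ℝ} (hc : 0 < c) (hy : |y - logistic s| ≤ 1)
    (hr : c ≤ logistic s * (1 - logistic s)) : |hf y s| ≤ (Real.sqrt c)⁻¹ := by
  have hA : Real.sqrt c ≤ Af s := Real.sqrt_le_sqrt hr
  have hcpos : 0 < Real.sqrt c := Real.sqrt_pos.2 hc
  unfold hf
  rw [abs_div, abs_of_pos (Af_pos s)]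
  rw [← one_div]
  exact div_le_div₀ (by norm_num) hy hcpos hA

lemma abs_hf'_le {y s c : ℝ} (hc : 0 < c) (hy : |y - logistic s| ≤ 1)
    (hr : c ≤ logistic s * (1 - logistic s)) : |hf' y s| ≤ (3/8) / c := by
  unfold hf'
  rw [abs_div]
  have h1 : |(-(logistic s * (1 - logistic s)) * Af s - (y - logistic s) * Af' s)| ≤ 3/8 := by
    have a1 : |(-(logistic s * (1 - logistic s))) * Af s| ≤ 1/8 := by
      rw [abs_mul, abs_neg]
      have : |logistic s * (1 - logistic s)| ≤ 1/4 := by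
        rw [abs_of_pos (sig_mul_pos s)]; nlinarith [sq_nonneg (logistic s - 1/2)]
      have h2 : |Af s| ≤ 1/2 := abs_le.2 ⟨by linarith [Af_pos s], Af_le_half s⟩
      nlinarith [abs_nonneg (logistic s * (1 - logistic s)), abs_nonneg (Af s)]
    have a2 : |(y - logistic s) * Af' s| ≤ 1/4 := by
      rw [abs_mul]
      nlinarith [abs_Af'_le s, abs_nonneg (y - logistic s), abs_nonneg (Af' s)]
    calc |(-(logistic s * (1 - logistic s))) * Af s - (y - logistic s) * Af' s|
        ≤ |(-(logistic s * (1 - logistic s))) * Af s| + |(y - logistic s) * Af' s| :=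
          abs_sub _ _
      _ ≤ 3/8 := by linarith
  have h2 : c ≤ |(Af s)^2| := by
    rw [abs_of_pos (pow_pos (Af_pos s) 2), Af_sq]; exact hr
  calc |(-(logistic s * (1 - logistic s)) * Af s - (y - logistic s) * Af' s)| / |(Af s)^2|
      ≤ (3/8) / c := div_le_div₀ (by norm_num) h1 hc h2


lemma Af_def (s : ℝ) : Af s = Real.sqrt (logistic s * (1 - logistic s)) := rfl
lemma hf_def (y s : ℝ) : hf y s = (y - logistic s) / Af s := rfl

lemma sSup_abs_le {S : Set ℝ} {B : ℝ} (hB : 0 ≤ B) (h : ∀ r ∈ S, 0 ≤ r ∧ r ≤ B) :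
    |sSup S| ≤ B := by
  have h1 : sSup S ≤ B := Real.sSup_le (fun r hr => (h r hr).2) hB
  have h2 : 0 ≤ sSup S := Real.sSup_nonneg (fun r hr => (h r hr).1)
  rw [abs_of_nonneg h2]; exact h1

variable {m p : ℕ}

/-- the dot-product continuous linear map. -/
def dotCLM (v : Fin p → ℝ) : (Fin p → ℝ) →L[ℝ] ℝ :=
  ∑ k, v k • (ContinuousLinearMap.proj (R := ℝ) (φ := fun _ : Fin p => ℝ) k)

@[simp] lemma dotCLM_apply (v x : Fin p → ℝ) : dotCLM v x = v ⬝ᵥ x := by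
  simp [dotCLM, dotProduct, ContinuousLinearMap.sum_apply]

lemma hasFDerivAt_dot (v : Fin p → ℝ) (β : Fin p → ℝ) :
    HasFDerivAt (fun x : Fin p → ℝ => v ⬝ᵥ x) (dotCLM v) β := by
  have h := (dotCLM v).hasFDerivAt (x := β)
  apply h.congr_of_eventuallyEq
  filter_upwards [] with x
  simp

/-- Expansion of a coordinate of `Scluster`. -/
lemma Scluster_apply (Xi : Matrix (Fin m) (Fin p) ℝ) (W : Matrix (Fin m) (Fin m) ℝ)
    (x : Fin p → ℝ) (Yi : Fin m → ℝ) (k : Fin p) :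
    Scluster Xi W x Yi k =
      ∑ j, ∑ j', Xi j k * (Af (Xi j ⬝ᵥ x) * (W j j' * hf (Yi j') (Xi j' ⬝ᵥ x))) := by
  unfold Scluster Ahalf Ainvhalf
  simp only [Af_def, hf_def, GEE.piv, Matrix.mulVec, dotProduct, Matrix.mul_apply,
    Matrix.transpose_apply, Matrix.diagonal_apply, Pi.sub_apply, ite_mul, mul_ite,
    zero_mul, mul_zero, Finset.sum_ite_eq, Finset.sum_ite_eq', Finset.mem_univ, if_true,
    Finset.sum_mul, Finset.mul_sum]
  rw [Finset.sum_comm]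
  refine Finset.sum_congr rfl fun j _ => Finset.sum_congr rfl fun j' _ => ?_
  rw [div_eq_mul_inv]
  ring

/-- The derivative CLM of a coordinate of `Scluster`. -/
def Lclm (Xi : Matrix (Fin m) (Fin p) ℝ) (W : Matrix (Fin m) (Fin m) ℝ)
    (Yi : Fin m → ℝ) (k : Fin p) (β : Fin p → ℝ) : (Fin p → ℝ) →L[ℝ] ℝ :=
  ∑ j, ∑ j', (Xi j k) •
    (Af (Xi j ⬝ᵥ β) • ((W j j') • (hf' (Yi j') (Xi j' ⬝ᵥ β) • dotCLM (Xi j'))) +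
     (W j j' * hf (Yi j') (Xi j' ⬝ᵥ β)) • (Af' (Xi j ⬝ᵥ β) • dotCLM (Xi j)))

lemma hasFDerivAt_Scluster (Xi : Matrix (Fin m) (Fin p) ℝ) (W : Matrix (Fin m) (Fin m) ℝ)
    (Yi : Fin m → ℝ) (k : Fin p) (β : Fin p → ℝ) :
    HasFDerivAt (fun x => Scluster Xi W x Yi k) (Lclm Xi W Yi k β) β := by
  have main : HasFDerivAt
      (fun x => ∑ j, ∑ j', Xi j k * (Af (Xi j ⬝ᵥ x) * (W j j' * hf (Yi j') (Xi j' ⬝ᵥ x))))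
      (Lclm Xi W Yi k β) β := by
    unfold Lclm
    apply HasFDerivAt.fun_sum
    intro j _
    apply HasFDerivAt.fun_sum
    intro j' _
    have h1 : HasFDerivAt (fun x : Fin p → ℝ => Af (Xi j ⬝ᵥ x))
        (Af' (Xi j ⬝ᵥ β) • dotCLM (Xi j)) β :=
      (hasDerivAt_Af (Xi j ⬝ᵥ β)).comp_hasFDerivAt β (hasFDerivAt_dot (Xi j) β)
    have h2 : HasFDerivAt (fun x : Fin p → ℝ => hf (Yi j') (Xi j' ⬝ᵥ x))
        (hf' (Yi j') (Xi j' ⬝ᵥ β) • dotCLM (Xi j')) β :=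
      (hasDerivAt_hf (Yi j') (Xi j' ⬝ᵥ β)).comp_hasFDerivAt β (hasFDerivAt_dot (Xi j') β)
    have h3 := (h1.mul (h2.const_mul (W j j'))).const_mul (Xi j k)
    exact h3
  apply main.congr_of_eventuallyEq
  filter_upwards [] with x
  rw [Scluster_apply]

lemma Lclm_apply (Xi : Matrix (Fin m) (Fin p) ℝ) (W : Matrix (Fin m) (Fin m) ℝ)
    (Yi : Fin m → ℝ) (k : Fin p) (β w : Fin p → ℝ) :
    Lclm Xi W Yi k β w =
      ∑ j, ∑ j', Xi j k *
        (Af (Xi j ⬝ᵥ β) * (W j j' * (hf' (Yi j') (Xi j' ⬝ᵥ β) * (Xi j' ⬝ᵥ w))) +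
         (W j j' * hf (Yi j') (Xi j' ⬝ᵥ β)) * (Af' (Xi j ⬝ᵥ β) * (Xi j ⬝ᵥ w))) := by
  unfold Lclm
  simp [ContinuousLinearMap.sum_apply, smul_add, mul_add]

lemma clm_sum_single (L : (Fin p → ℝ) →L[ℝ] ℝ) (b : Fin p → ℝ) :
    ∑ l, L (Pi.single l 1) * b l = L b := by
  have hb : b = ∑ l, Pi.single l (b l) := by rw [Finset.univ_sum_single]
  conv_rhs => rw [hb]
  rw [map_sum]
  refine Finset.sum_congr rfl fun l _ => ?_
  have h2 : Pi.single l (b l) = b l • (Pi.single l (1:ℝ) : Fin p → ℝ) := by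
    funext k
    by_cases h : k = l <;> simp [Pi.single_apply, h]
  rw [h2, ContinuousLinearMap.map_smul, smul_eq_mul, mul_comm]

lemma entry_le_fnorm {a b : ℕ} (M : Matrix (Fin a) (Fin b) ℝ) (i : Fin a) (j : Fin b) :
    |M i j| ≤ fnorm M := by
  unfold fnorm
  rw [← Real.sqrt_sq_eq_abs]
  apply Real.sqrt_le_sqrt
  calc M i j ^ 2 ≤ ∑ j', M i j' ^ 2 :=
        Finset.single_le_sum (f := fun j' => M i j' ^ 2) (fun j' _ => sq_nonneg _)
          (Finset.mem_univ j)
    _ ≤ ∑ i', ∑ j', M i' j' ^ 2 :=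
        Finset.single_le_sum (f := fun i' => ∑ j', M i' j' ^ 2)
          (fun i' _ => Finset.sum_nonneg fun j' _ => sq_nonneg _) (Finset.mem_univ i)

variable {N : ℕ}

def Tval (X : Fin N → Matrix (Fin m) (Fin p) ℝ) (Y : Fin N → Fin m → ℝ)
    (W : Matrix (Fin m) (Fin m) ℝ) (β b : Fin p → ℝ) : ℝ :=
  ∑ i, ∑ j, ∑ j', (X i j ⬝ᵥ b) *
    (Af (X i j ⬝ᵥ β) * (W j j' * (hf' (Y i j') (X i j' ⬝ᵥ β) * (X i j' ⬝ᵥ b))) +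
     (W j j' * hf (Y i j') (X i j' ⬝ᵥ β)) * (Af' (X i j ⬝ᵥ β) * (X i j ⬝ᵥ b)))

lemma sum_bL_eq_Tval (X : Fin N → Matrix (Fin m) (Fin p) ℝ) (Y : Fin N → Fin m → ℝ)
    (W : Matrix (Fin m) (Fin m) ℝ) (β b : Fin p → ℝ) :
    ∑ k, b k * ((∑ i, Lclm (X i) W (Y i) k β) b) = Tval X Y W β b := by
  unfold Tval
  simp only [ContinuousLinearMap.sum_apply, Lclm_apply]
  simp only [Finset.mul_sum]
  rw [Finset.sum_comm]
  refine Finset.sum_congr rfl fun i _ => ?_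
  rw [Finset.sum_comm]
  refine Finset.sum_congr rfl fun j _ => ?_
  rw [Finset.sum_comm]
  refine Finset.sum_congr rfl fun j' _ => ?_
  have hu : X i j ⬝ᵥ b = ∑ k, b k * X i j k := by
    rw [dotProduct]; exact Finset.sum_congr rfl fun k _ => mul_comm _ _
  rw [hu, Finset.sum_mul]
  exact Finset.sum_congr rfl fun k _ => by ring

lemma Tval_sub (X : Fin N → Matrix (Fin m) (Fin p) ℝ) (Y : Fin N → Fin m → ℝ)
    (W1 W2 : Matrix (Fin m) (Fin m) ℝ) (β b : Fin p → ℝ) :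
    Tval X Y W2 β b - Tval X Y W1 β b = Tval X Y (W2 - W1) β b := by
  unfold Tval
  rw [← Finset.sum_sub_distrib]
  refine Finset.sum_congr rfl fun i _ => ?_
  rw [← Finset.sum_sub_distrib]
  refine Finset.sum_congr rfl fun j _ => ?_
  rw [← Finset.sum_sub_distrib]
  refine Finset.sum_congr rfl fun j' _ => ?_
  simp only [Matrix.sub_apply]
  ring

lemma Tval_bound (X : Fin N → Matrix (Fin m) (Fin p) ℝ) (Y : Fin N → Fin m → ℝ)
    (E : Matrix (Fin m) (Fin m) ℝ) (β b : Fin p → ℝ) (c0 : ℝ) (hc0 : 0 < c0)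
    (hrange : ∀ i j, c0 ≤ logistic (X i j ⬝ᵥ β) * (1 - logistic (X i j ⬝ᵥ β)))
    (hy : ∀ i j, |Y i j - logistic (X i j ⬝ᵥ β)| ≤ 1) :
    |Tval X Y E β b| ≤
      fnorm E * (((3/16)/c0 + (Real.sqrt c0)⁻¹/4) * (m * ∑ i, ∑ j, (X i j ⬝ᵥ b)^2)) := by
  have hF : 0 ≤ fnorm E := Real.sqrt_nonneg _
  have hK2 : (0:ℝ) < (3/16)/c0 := by positivity
  have hK1 : (0:ℝ) < (Real.sqrt c0)⁻¹ := by
    have := Real.sqrt_pos.2 hc0; positivity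
  calc |Tval X Y E β b| ≤ ∑ i, |∑ j, ∑ j', (X i j ⬝ᵥ b) *
      (Af (X i j ⬝ᵥ β) * (E j j' * (hf' (Y i j') (X i j' ⬝ᵥ β) * (X i j' ⬝ᵥ b))) +
       (E j j' * hf (Y i j') (X i j' ⬝ᵥ β)) * (Af' (X i j ⬝ᵥ β) * (X i j ⬝ᵥ b)))| :=
        Finset.abs_sum_le_sum_abs _ _
    _ ≤ ∑ i, fnorm E * (((3/16)/c0 * ((∑ j, |X i j ⬝ᵥ b|) * (∑ j', |X i j' ⬝ᵥ b|))) +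
          ((Real.sqrt c0)⁻¹/4 * (m * ∑ j, (X i j ⬝ᵥ b)^2))) := by
        refine Finset.sum_le_sum fun i _ => ?_
        calc |∑ j, ∑ j', _| ≤ ∑ j, ∑ j', |(X i j ⬝ᵥ b) *
            (Af (X i j ⬝ᵥ β) * (E j j' * (hf' (Y i j') (X i j' ⬝ᵥ β) * (X i j' ⬝ᵥ b))) +
             (E j j' * hf (Y i j') (X i j' ⬝ᵥ β)) * (Af' (X i j ⬝ᵥ β) * (X i j ⬝ᵥ b)))| := by
              refine (Finset.abs_sum_le_sum_abs _ _).trans ?_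
              exact Finset.sum_le_sum fun j _ => Finset.abs_sum_le_sum_abs _ _
          _ ≤ ∑ j, ∑ j', (fnorm E * ((3/16)/c0 * (|X i j ⬝ᵥ b| * |X i j' ⬝ᵥ b|)) +
                fnorm E * ((Real.sqrt c0)⁻¹/4 * (X i j ⬝ᵥ b)^2)) := by
              refine Finset.sum_le_sum fun j _ => Finset.sum_le_sum fun j' _ => ?_
              have e1 : |Af (X i j ⬝ᵥ β)| ≤ 1/2 :=
                abs_le.2 ⟨by linarith [Af_pos (X i j ⬝ᵥ β)], Af_le_half _⟩
              have e2 : |Af' (X i j ⬝ᵥ β)| ≤ 1/4 := abs_Af'_le _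
              have e3 : |hf (Y i j') (X i j' ⬝ᵥ β)| ≤ (Real.sqrt c0)⁻¹ :=
                abs_hf_le hc0 (hy i j') (hrange i j')
              have e4 : |hf' (Y i j') (X i j' ⬝ᵥ β)| ≤ (3/8)/c0 :=
                abs_hf'_le hc0 (hy i j') (hrange i j')
              have e5 : |E j j'| ≤ fnorm E := entry_le_fnorm E j j'
              rw [abs_mul]
              calc |X i j ⬝ᵥ b| * |Af (X i j ⬝ᵥ β) * (E j j' * (hf' (Y i j') (X i j' ⬝ᵥ β) * (X i j' ⬝ᵥ b))) +
                    (E j j' * hf (Y i j') (X i j' ⬝ᵥ β)) * (Af' (X i j ⬝ᵥ β) * (X i j ⬝ᵥ b))|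
                  ≤ |X i j ⬝ᵥ b| * (|Af (X i j ⬝ᵥ β)| * (|E j j'| * (|hf' (Y i j') (X i j' ⬝ᵥ β)| * |X i j' ⬝ᵥ b|)) +
                    (|E j j'| * |hf (Y i j') (X i j' ⬝ᵥ β)|) * (|Af' (X i j ⬝ᵥ β)| * |X i j ⬝ᵥ b|)) := by
                    refine mul_le_mul_of_nonneg_left ?_ (abs_nonneg _)
                    refine (abs_add_le _ _).trans ?_
                    simp only [abs_mul]
                    exact le_rfl
                _ ≤ |X i j ⬝ᵥ b| * ((1/2) * (fnorm E * ((3/8)/c0 * |X i j' ⬝ᵥ b|)) +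
                    (fnorm E * (Real.sqrt c0)⁻¹) * ((1/4) * |X i j ⬝ᵥ b|)) := by
                    refine mul_le_mul_of_nonneg_left ?_ (abs_nonneg _)
                    gcongr <;> first | assumption | positivity
                _ = fnorm E * ((3/16)/c0 * (|X i j ⬝ᵥ b| * |X i j' ⬝ᵥ b|)) +
                    fnorm E * ((Real.sqrt c0)⁻¹/4 * (X i j ⬝ᵥ b)^2) := by
                    rw [← sq_abs (X i j ⬝ᵥ b)]; ring
          _ = fnorm E * ((3/16)/c0 * ((∑ j, |X i j ⬝ᵥ b|) * (∑ j', |X i j' ⬝ᵥ b|))) +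
                fnorm E * ((Real.sqrt c0)⁻¹/4 * (m * ∑ j, (X i j ⬝ᵥ b)^2)) := by
              simp only [Finset.sum_add_distrib, ← Finset.mul_sum, ← Finset.sum_mul,
                Finset.sum_const, Finset.card_univ, Fintype.card_fin, nsmul_eq_mul]
          _ = fnorm E * (((3/16)/c0 * ((∑ j, |X i j ⬝ᵥ b|) * (∑ j', |X i j' ⬝ᵥ b|))) +
                ((Real.sqrt c0)⁻¹/4 * (m * ∑ j, (X i j ⬝ᵥ b)^2))) := by ring
    _ ≤ ∑ i, fnorm E * (((3/16)/c0 * (m * ∑ j, (X i j ⬝ᵥ b)^2)) +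
          ((Real.sqrt c0)⁻¹/4 * (m * ∑ j, (X i j ⬝ᵥ b)^2))) := by
        refine Finset.sum_le_sum fun i _ => ?_
        refine mul_le_mul_of_nonneg_left ?_ hF
        refine add_le_add ?_ le_rfl
        refine mul_le_mul_of_nonneg_left ?_ hK2.le
        have hcs : (∑ j, |X i j ⬝ᵥ b|)^2 ≤ m * ∑ j, (X i j ⬝ᵥ b)^2 := by
          have := sq_sum_le_card_mul_sum_sq (s := Finset.univ) (f := fun j => |X i j ⬝ᵥ b|)
          simpa [sq_abs, Finset.card_univ] using this
        calc (∑ j, |X i j ⬝ᵥ b|) * (∑ j', |X i j' ⬝ᵥ b|) = (∑ j, |X i j ⬝ᵥ b|)^2 := (sq _).symm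
          _ ≤ m * ∑ j, (X i j ⬝ᵥ b)^2 := hcs
    _ = fnorm E * (((3/16)/c0 + (Real.sqrt c0)⁻¹/4) * (m * ∑ i, ∑ j, (X i j ⬝ᵥ b)^2)) := by
        have key : ∀ (F a bb : ℝ) (S : Fin N → ℝ),
            ∑ i, F * (a * (m * S i) + bb * (m * S i)) = F * ((a + bb) * (m * ∑ i, S i)) := by
          intros F a bb S
          conv_rhs => rw [Finset.mul_sum, Finset.mul_sum, Finset.mul_sum]
          exact Finset.sum_congr rfl fun i _ => by ring
        exact key _ _ _ _

lemma fnorm_sub_comm {a b : ℕ} (M N : Matrix (Fin a) (Fin b) ℝ) :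
    fnorm (M - N) = fnorm (N - M) := by
  unfold fnorm
  congr 1
  refine Finset.sum_congr rfl fun i _ => Finset.sum_congr rfl fun j _ => ?_
  simp only [Matrix.sub_apply]
  ring

/-- The core deterministic bound. -/
lemma core_bound (X : Fin N → Matrix (Fin m) (Fin p) ℝ) (Y : Fin N → Fin m → ℝ)
    (W1 W2 : Matrix (Fin m) (Fin m) ℝ) (β b : Fin p → ℝ) (c0 : ℝ) (hc0 : 0 < c0)
    (hrange : ∀ i j, c0 ≤ logistic (X i j ⬝ᵥ β) * (1 - logistic (X i j ⬝ᵥ β)))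
    (hy : ∀ i j, |Y i j - logistic (X i j ⬝ᵥ β)| ≤ 1) :
    |b ⬝ᵥ ((-(jacobian (fun x => ∑ i, Scluster (X i) W1 x (Y i)) β)) -
           (-(jacobian (fun x => ∑ i, Scluster (X i) W2 x (Y i)) β))).mulVec b| ≤
      fnorm (W1 - W2) *
        (((3/16)/c0 + (Real.sqrt c0)⁻¹/4) * (m * ∑ i, ∑ j, (X i j ⬝ᵥ b)^2)) := by
  have hF : ∀ (W : Matrix (Fin m) (Fin m) ℝ) (k : Fin p),
      HasFDerivAt (fun x => (∑ i, Scluster (X i) W x (Y i)) k)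
        (∑ i, Lclm (X i) W (Y i) k β) β := by
    intro W k
    have h := HasFDerivAt.sum (u := Finset.univ)
      (fun i _ => hasFDerivAt_Scluster (X i) W (Y i) k β)
    apply h.congr_of_eventuallyEq
    filter_upwards [] with x
    simp [Finset.sum_apply]
  have hjac : ∀ (W : Matrix (Fin m) (Fin m) ℝ) (k l : Fin p),
      jacobian (fun x => ∑ i, Scluster (X i) W x (Y i)) β k l
        = (∑ i, Lclm (X i) W (Y i) k β) (Pi.single l 1) := by
    intro W k l
    unfold jacobian
    simp only [Matrix.of_apply]
    rw [(hF W k).fderiv]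
  have key : b ⬝ᵥ ((-(jacobian (fun x => ∑ i, Scluster (X i) W1 x (Y i)) β)) -
           (-(jacobian (fun x => ∑ i, Scluster (X i) W2 x (Y i)) β))).mulVec b
      = Tval X Y (W2 - W1) β b := by
    rw [← Tval_sub, ← sum_bL_eq_Tval, ← sum_bL_eq_Tval]
    simp only [dotProduct, Matrix.mulVec, Matrix.sub_apply, Matrix.neg_apply]
    rw [← Finset.sum_sub_distrib]
    refine Finset.sum_congr rfl fun k _ => ?_
    rw [← mul_sub]
    congr 1
    have : ∀ l, (-(jacobian (fun x => ∑ i, Scluster (X i) W1 x (Y i)) β k l) -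
        -(jacobian (fun x => ∑ i, Scluster (X i) W2 x (Y i)) β k l))
        = ((∑ i, Lclm (X i) W2 (Y i) k β) - (∑ i, Lclm (X i) W1 (Y i) k β)) (Pi.single l 1) := by
      intro l
      rw [ContinuousLinearMap.sub_apply, hjac, hjac]
      ring
    calc (fun j => ∑ l, (-(jacobian (fun x => ∑ i, Scluster (X i) W1 x (Y i)) β j l) -
            -(jacobian (fun x => ∑ i, Scluster (X i) W2 x (Y i)) β j l)) * b l) k
        = ∑ l, ((∑ i, Lclm (X i) W2 (Y i) k β) - (∑ i, Lclm (X i) W1 (Y i) k β))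
            (Pi.single l 1) * b l := by
          simp only []
          exact Finset.sum_congr rfl fun l _ => by rw [this l]
      _ = ((∑ i, Lclm (X i) W2 (Y i) k β) - (∑ i, Lclm (X i) W1 (Y i) k β)) b :=
          clm_sum_single _ b
      _ = (∑ i, Lclm (X i) W2 (Y i) k β) b - (∑ i, Lclm (X i) W1 (Y i) k β) b := by
          rw [ContinuousLinearMap.sub_apply]
  rw [key, fnorm_sub_comm W1 W2]
  exact Tval_bound X Y (W2 - W1) β b c0 hc0 hrange hy

lemma dot_le_vnorm_mul_vnorm {k : ℕ} (v w : Fin k → ℝ) :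
    |v ⬝ᵥ w| ≤ vnorm v * vnorm w := by
  unfold vnorm
  rw [← Real.sqrt_sq_eq_abs, ← Real.sqrt_mul (by positivity)]
  apply Real.sqrt_le_sqrt
  exact Finset.sum_mul_sq_le_sq_mul_sq Finset.univ v w

lemma S_eq {m p N : ℕ} (X : Fin N → Matrix (Fin m) (Fin p) ℝ) (b : Fin p → ℝ) :
    ∑ i, ∑ j, (X i j ⬝ᵥ b)^2 = b ⬝ᵥ (∑ i, (X i)ᵀ * (X i)).mulVec b := by
  have hsum : (∑ i, (X i)ᵀ * (X i)).mulVec b = ∑ i, ((X i)ᵀ * (X i)).mulVec b := by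
    funext k
    simp [Matrix.mulVec, dotProduct, Matrix.sum_apply, Finset.sum_mul]
    rw [Finset.sum_comm]
  have hdot : b ⬝ᵥ (∑ i, ((X i)ᵀ * (X i)).mulVec b) = ∑ i, b ⬝ᵥ ((X i)ᵀ * (X i)).mulVec b := by
    simp only [dotProduct, Finset.sum_apply, Finset.mul_sum]
    rw [Finset.sum_comm]
  rw [hsum, hdot]
  refine Finset.sum_congr rfl fun i _ => ?_
  rw [← Matrix.mulVec_mulVec, Matrix.dotProduct_mulVec, Matrix.vecMul_transpose]
  rw [dotProduct]
  exact Finset.sum_congr rfl fun j _ => sq ((X i *ᵥ b) j)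

lemma range_bound {b1 b2 s0 s : ℝ} (hb1 : 0 < b1) (hb2 : b2 < 1)
    (h1 : b1 ≤ logistic s0) (h2 : logistic s0 ≤ b2) (hs : |s - s0| ≤ 1) :
    Real.exp (-2) * (b1 * (1 - b2)) ≤ logistic s * (1 - logistic s) := by
  rw [abs_le] at hs
  have l1 : Real.exp (-1) * b1 ≤ logistic s := by
    calc Real.exp (-1) * b1 ≤ Real.exp (-1) * logistic s0 := by
          exact mul_le_mul_of_nonneg_left h1 (Real.exp_nonneg _)
      _ ≤ logistic s := logistic_shift_lower (by linarith)
  have l2 : Real.exp (-1) * (1 - b2) ≤ 1 - logistic s := by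
    calc Real.exp (-1) * (1 - b2) ≤ Real.exp (-1) * (1 - logistic s0) := by
          exact mul_le_mul_of_nonneg_left (by linarith) (Real.exp_nonneg _)
      _ ≤ 1 - logistic s := one_sub_logistic_shift_lower (by linarith)
  have hexp : Real.exp (-2) = Real.exp (-1) * Real.exp (-1) := by
    rw [← Real.exp_add]; norm_num
  calc Real.exp (-2) * (b1 * (1 - b2)) = (Real.exp (-1) * b1) * (Real.exp (-1) * (1 - b2)) := by
        rw [hexp]; ring
    _ ≤ logistic s * (1 - logistic s) := by
        apply mul_le_mul l1 l2 (mul_nonneg (Real.exp_nonneg _) (by linarith)) (logistic_pos s).le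

lemma ybound {y s : ℝ} (hy : y = 0 ∨ y = 1) : |y - logistic s| ≤ 1 := by
  have h1 := logistic_pos s
  have h2 := logistic_lt_one s
  rcases hy with rfl | rfl
  · rw [abs_le]; constructor <;> nlinarith
  · rw [abs_le]; constructor <;> nlinarith

lemma nsqrt_identity (n pn : ℕ) (hn : 0 < n) :
    (n : ℝ) * Real.sqrt ((pn : ℝ) / n) = Real.sqrt ((n : ℝ) * pn) := by
  have hn' : (0:ℝ) < n := by exact_mod_cast hn
  rw [show ((n:ℝ) * pn) = (n:ℝ)^2 * ((pn:ℝ)/n) from by field_simp,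
    Real.sqrt_mul (by positivity : (0:ℝ) ≤ (n:ℝ)^2), Real.sqrt_sq hn'.le]

lemma sqrt_mul_sqrt_div (pn n : ℕ) :
    Real.sqrt (pn : ℝ) * Real.sqrt ((pn:ℝ)/n) = Real.sqrt ((pn:ℝ)^2 / n) := by
  rw [← Real.sqrt_mul (by positivity)]
  congr 1
  ring

end GEEAux
open GEEAux

/-- Lemma 3: uniform approximation of the negative gradient D_n by D̄_n. -/
theorem gee_gradient_uniform_approximation
    (m : ℕ) (hm : 0 < m) (p : ℕ → ℕ) (hp : ∀ n, 0 < p n)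
    (Ω : ℕ → Type) [∀ n, MeasurableSpace (Ω n)]
    (P : ∀ n, Measure (Ω n)) [∀ n, IsProbabilityMeasure (P n)]
    (X : ∀ n, Fin n → Matrix (Fin m) (Fin (p n)) ℝ)
    (Y : ∀ n, Fin n → Ω n → Fin m → ℝ)
    (β0 : ∀ n, Fin (p n) → ℝ)
    (hmeas : ∀ n i, Measurable (Y n i))
    (hbin : ∀ n i ω j, Y n i ω j = 0 ∨ Y n i ω j = 1)
    (hindep : ∀ n, iIndepFun (fun i => Y n i) (P n))
    (hmean : ∀ n (i : Fin n) j, ∫ ω, Y n i ω j ∂(P n) = piv (X n i) (β0 n) j)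
    (R0 : Matrix (Fin m) (Fin m) ℝ) (hR0 : R0.PosDef)
    (hcorr : ∀ n (i : Fin n) j j',
      ∫ ω, eps (X n i) (β0 n) (Y n i ω) j * eps (X n i) (β0 n) (Y n i ω) j' ∂(P n) = R0 j j')
    (hA1 : ∃ C : ℝ, ∀ n (i : Fin n) j, vnorm (X n i j) ≤ C * Real.sqrt (p n))
    (b1 b2 : ℝ) (hb1 : 0 < b1) (hb2 : b2 < 1)
    (hA2 : ∀ n (i : Fin n) j, b1 ≤ piv (X n i) (β0 n) j ∧ piv (X n i) (β0 n) j ≤ b2)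
    (hA2c : ∀ n, ∃ B : Set (Fin (p n) → ℝ), IsCompact B ∧ β0 n ∈ interior B)
    (b3 b4 : ℝ) (hb3 : 0 < b3)
    (hA3 : ∀ n, 0 < n → ∀ v : Fin (p n) → ℝ,
      b3 * (∑ k, v k ^ 2) ≤ (n : ℝ)⁻¹ * (v ⬝ᵥ (∑ i, (X n i)ᵀ * X n i).mulVec v) ∧
      (n : ℝ)⁻¹ * (v ⬝ᵥ (∑ i, (X n i)ᵀ * X n i).mulVec v) ≤ b4 * (∑ k, v k ^ 2))
    (Rbar : Matrix (Fin m) (Fin m) ℝ) (hRbar : Rbar.PosDef)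
    (Rhat : ∀ n, Ω n → Matrix (Fin m) (Fin m) ℝ)
    (hA4 : IsBigOP P (fun n ω => fnorm ((Rhat n ω)⁻¹ - Rbar⁻¹))
      (fun n => Real.sqrt (p n / n)))
    (hrate : Tendsto (fun n => (p n : ℝ) ^ 2 / n) atTop (𝓝 0)) :
    ∀ Δ : ℝ, 0 < Δ →
      IsBigOP P (fun n ω => sSup {r : ℝ | ∃ β b : Fin (p n) → ℝ,
          vnorm (β - β0 n) ≤ Δ * Real.sqrt (p n / n) ∧ vnorm b = 1 ∧
          r = |b ⬝ᵥ
            ((-(jacobian (fun x => ∑ i, Scluster (X n i) ((Rhat n ω)⁻¹) x (Y n i ω)) β)) -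
             (-(jacobian (fun x => ∑ i, Scluster (X n i) Rbar⁻¹ x (Y n i ω)) β))).mulVec b|})
        (fun n => Real.sqrt ((n : ℝ) * p n)) := by
  intro Δ hΔ ε hε
  obtain ⟨CX, hCX⟩ := hA1
  set CX1 : ℝ := |CX| + 1 with hCX1def
  have hCX1pos : 0 < CX1 := by positivity
  have hCX1 : ∀ n (i : Fin n) j, vnorm (X n i j) ≤ CX1 * Real.sqrt (p n) := by
    intro n i j
    refine (hCX n i j).trans (mul_le_mul_of_nonneg_right ?_ (Real.sqrt_nonneg _))
    have := le_abs_self CX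
    rw [hCX1def]; linarith
  obtain ⟨C0, hC0pos, hC0⟩ := hA4 ε hε
  have hb2' : (0:ℝ) < 1 - b2 := by linarith
  set c0 : ℝ := Real.exp (-2) * (b1 * (1 - b2)) with hc0def
  have hc0 : 0 < c0 := mul_pos (Real.exp_pos _) (mul_pos hb1 hb2')
  have hb4pos : 0 < b4 := by
    have h0 : 0 < p 1 := hp 1
    obtain ⟨hlow, hupp⟩ := hA3 1 one_pos (fun _ : Fin (p 1) => (1:ℝ))
    have hsum : ∑ _k : Fin (p 1), (1:ℝ) ^ 2 = p 1 := by simp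
    rw [hsum] at hlow hupp
    have hp1 : (0:ℝ) < p 1 := by exact_mod_cast h0
    nlinarith
  have hsc0 : 0 < Real.sqrt c0 := Real.sqrt_pos.2 hc0
  set K : ℝ := (3/16)/c0 + (Real.sqrt c0)⁻¹/4 with hKdef
  have hK : 0 < K := by
    rw [hKdef]
    have h1 : (0:ℝ) < (3/16)/c0 := by positivity
    have h2 : (0:ℝ) < (Real.sqrt c0)⁻¹ := by positivity
    linarith
  have hm' : (0:ℝ) < m := by exact_mod_cast hm
  set Cb : ℝ := C0 * (K * (m * b4)) with hCbdef
  have hCb : 0 < Cb := mul_pos hC0pos (mul_pos hK (mul_pos hm' hb4pos))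
  refine ⟨Cb + 1, by linarith, ?_⟩
  have hsq0 : Tendsto (fun n => Real.sqrt ((p n : ℝ)^2 / n)) atTop (𝓝 0) := by
    have h := (Real.continuous_sqrt.tendsto (0:ℝ)).comp hrate
    rw [Real.sqrt_zero] at h
    exact h
  have h2 : Tendsto (fun n => (CX1 * Δ) * Real.sqrt ((p n:ℝ)^2 / n)) atTop (𝓝 0) := by
    simpa using hsq0.const_mul (CX1 * Δ)
  have E3 : ∀ᶠ n in atTop, (CX1 * Δ) * Real.sqrt ((p n:ℝ)^2 / n) ≤ 1 :=
    h2.eventually (eventually_le_nhds (by norm_num))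
  filter_upwards [hC0, E3, eventually_ge_atTop 1] with n hPn h3 hn1
  have hn0 : 0 < n := hn1
  have hnR : (0:ℝ) < n := by exact_mod_cast hn0
  refine le_trans (measure_mono ?_) hPn
  intro ω hω
  by_contra hcon
  rw [Set.mem_setOf_eq, not_lt] at hcon
  have hEb : fnorm ((Rhat n ω)⁻¹ - Rbar⁻¹) ≤ C0 * Real.sqrt ((p n : ℝ) / n) :=
    (le_abs_self _).trans hcon
  refine absurd hω ?_
  rw [Set.mem_setOf_eq, not_lt]
  have hBnn : (0:ℝ) ≤ (Cb + 1) * Real.sqrt ((n:ℝ) * p n) := by positivity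
  refine le_trans (sSup_abs_le (by positivity : (0:ℝ) ≤ Cb * Real.sqrt ((n:ℝ) * p n)) ?_) ?_
  · rintro r ⟨β, bb, hball, hbb, rfl⟩
    refine ⟨abs_nonneg _, ?_⟩
    have hsum_bb : ∑ k, bb k ^ 2 = 1 := by
      have h2 := congrArg (fun t : ℝ => t^2) hbb
      simpa [vnorm, Real.sq_sqrt (Finset.sum_nonneg fun k _ => sq_nonneg (bb k))] using h2
    have hrange : ∀ (i : Fin n) j,
        c0 ≤ logistic (X n i j ⬝ᵥ β) * (1 - logistic (X n i j ⬝ᵥ β)) := by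
      intro i j
      have ha2 : b1 ≤ logistic (X n i j ⬝ᵥ β0 n) ∧ logistic (X n i j ⬝ᵥ β0 n) ≤ b2 :=
        hA2 n i j
      rw [hc0def]
      apply range_bound hb1 hb2 ha2.1 ha2.2
      rw [← dotProduct_sub]
      have hvn : (0:ℝ) ≤ vnorm (β - β0 n) := Real.sqrt_nonneg _
      calc |X n i j ⬝ᵥ (β - β0 n)| ≤ vnorm (X n i j) * vnorm (β - β0 n) :=
            dot_le_vnorm_mul_vnorm _ _
        _ ≤ (CX1 * Real.sqrt (p n)) * (Δ * Real.sqrt ((p n:ℝ) / n)) :=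
            mul_le_mul (hCX1 n i j) hball hvn (by positivity)
        _ = (CX1 * Δ) * (Real.sqrt (p n) * Real.sqrt ((p n:ℝ)/n)) := by ring
        _ = (CX1 * Δ) * Real.sqrt ((p n:ℝ)^2 / n) := by rw [sqrt_mul_sqrt_div]
        _ ≤ 1 := h3
    have hy : ∀ (i : Fin n) j, |Y n i ω j - logistic (X n i j ⬝ᵥ β)| ≤ 1 :=
      fun i j => ybound (hbin n i ω j)
    have hcore := core_bound (X n) (fun i => Y n i ω) ((Rhat n ω)⁻¹) (Rbar⁻¹) β bb
      c0 hc0 hrange hy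
    have hSb : ∑ i, ∑ j, (X n i j ⬝ᵥ bb)^2 ≤ b4 * n := by
      have hupp := (hA3 n hn0 bb).2
      rw [hsum_bb, mul_one] at hupp
      rw [S_eq]
      have h5 := mul_le_mul_of_nonneg_left hupp hnR.le
      rw [← mul_assoc, mul_inv_cancel₀ (ne_of_gt hnR), one_mul] at h5
      linarith
    have hsq_nonneg : (0:ℝ) ≤ ∑ i, ∑ j, (X n i j ⬝ᵥ bb)^2 :=
      Finset.sum_nonneg fun i _ => Finset.sum_nonneg fun j _ => sq_nonneg _
    calc |bb ⬝ᵥ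
        ((-(jacobian (fun x => ∑ i, Scluster (X n i) ((Rhat n ω)⁻¹) x (Y n i ω)) β)) -
         (-(jacobian (fun x => ∑ i, Scluster (X n i) Rbar⁻¹ x (Y n i ω)) β))).mulVec bb|
        ≤ fnorm ((Rhat n ω)⁻¹ - Rbar⁻¹) *
            (((3/16)/c0 + (Real.sqrt c0)⁻¹/4) * (m * ∑ i, ∑ j, (X n i j ⬝ᵥ bb)^2)) := hcore
      _ ≤ (C0 * Real.sqrt ((p n:ℝ)/n)) * (K * (m * (b4 * n))) := by
          rw [hKdef]
          apply mul_le_mul hEb ?_ ?_ (by positivity)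
          · apply mul_le_mul_of_nonneg_left ?_ (by rw [← hKdef]; exact hK.le)
            exact mul_le_mul_of_nonneg_left hSb hm'.le
          · apply mul_nonneg (by rw [← hKdef]; exact hK.le)
            exact mul_nonneg hm'.le hsq_nonneg
      _ = Cb * ((n:ℝ) * Real.sqrt ((p n:ℝ)/n)) := by rw [hCbdef]; ring
      _ = Cb * Real.sqrt ((n:ℝ) * p n) := by rw [nsqrt_identity n (p n) hn0]
  · have := Real.sqrt_nonneg ((n:ℝ) * p n)
    nlinarith
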